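/- arXiv:2407.02020 — 6 statements merged into one kernel-verified Lean document; each statement's English description precedes it below -/
import Mathlib

section
/- Let F : ℝ^d → ℝ be μ_f-strongly convex and L_f-smooth, let A ∈ ℝ^{p×d} with σ_max²(A) ≤ L_A, let W' ∈ ℝ^{p×p} be symmetric PSD with λ_min⁺(W')² ≥ μ_{W'} and λ_max(W')² ≤ L_{W'}, and set r = μ_f/(2L_A), γ² = (μ_A + L_A)/μ_{W'} for some 0 < μ_A ≤ L_A. Define G(x,y) = F(x) + (r/2)‖Ax + γ W' y − b‖². Then for all x, x' ∈ ℝ^d and y, y' with y' − y ∈ range(W'), the Bregman divergence of G satisfies D_G(x',y'; x,y) ≥ (μ_f/2)·min{1/2, (μ_A + L_A)/(4L_A)}·(‖x'−x‖² + ‖y'−y‖²). -/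
open Matrix

private lemma stmt5_dp_nonneg {n : ℕ} (z : Fin n → ℝ) : 0 ≤ z ⬝ᵥ z :=
  Finset.sum_nonneg fun _ _ => mul_self_nonneg _

private lemma stmt5_dp_lower {n : ℕ} (a c : Fin n → ℝ) :
    1 / 2 * (c ⬝ᵥ c) - a ⬝ᵥ a ≤ (a + c) ⬝ᵥ (a + c) := by
  have h2 : 0 ≤ ((2:ℝ) • a + c) ⬝ᵥ ((2:ℝ) • a + c) := stmt5_dp_nonneg _
  simp only [add_dotProduct, dotProduct_add, smul_dotProduct, dotProduct_smul,
    smul_eq_mul, dotProduct_comm c a] at h2 ⊢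
  linarith

private lemma stmt5_key_aux {n m : ℕ} (A : Matrix (Fin n) (Fin m) ℝ)
    (W : Matrix (Fin n) (Fin n) ℝ) (hW : Wᵀ = W)
    (x x' : Fin m → ℝ) (y y' b : Fin n → ℝ) (r γ : ℝ) :
    r / 2 * ((A.mulVec x' + γ • W.mulVec y' - b) ⬝ᵥ (A.mulVec x' + γ • W.mulVec y' - b))
      - r / 2 * ((A.mulVec x + γ • W.mulVec y - b) ⬝ᵥ (A.mulVec x + γ • W.mulVec y - b))
      - (r • Aᵀ.mulVec (A.mulVec x + γ • W.mulVec y - b)) ⬝ᵥ (x' - x)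
      - ((r * γ) • W.mulVec (A.mulVec x + γ • W.mulVec y - b)) ⬝ᵥ (y' - y)
    = r / 2 * ((A.mulVec (x' - x) + γ • W.mulVec (y' - y)) ⬝ᵥ
        (A.mulVec (x' - x) + γ • W.mulVec (y' - y))) := by
  have htA : ∀ (z : Fin n → ℝ) (zz : Fin m → ℝ),
      Aᵀ.mulVec z ⬝ᵥ zz = z ⬝ᵥ A.mulVec zz := by
    intro z zz; rw [mulVec_transpose, ← dotProduct_mulVec]
  have htW : ∀ (z zz : Fin n → ℝ), W.mulVec z ⬝ᵥ zz = z ⬝ᵥ W.mulVec zz := by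
    intro z zz; conv_lhs => rw [← hW]
    rw [mulVec_transpose, ← dotProduct_mulVec]
  rw [smul_dotProduct, smul_dotProduct, smul_eq_mul, smul_eq_mul, htA, htW]
  rw [show x' = x + (x' - x) by abel, show y' = y + (y' - y) by abel]
  generalize x' - x = u
  generalize y' - y = v
  simp only [add_sub_cancel_left, mulVec_add, smul_add]
  generalize A.mulVec x = ax
  generalize A.mulVec u = au
  generalize W.mulVec y = wy
  generalize W.mulVec v = wv
  simp only [dotProduct_add, add_dotProduct, dotProduct_sub, sub_dotProduct,
    dotProduct_smul, smul_dotProduct, smul_eq_mul, dotProduct_comm]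
  ring

set_option maxHeartbeats 2000000 in
/-- Lemma 1, lower bound: with `r = μ_f/(2L_A)`, `γ² = (μ_A+L_A)/μ_{W'}`,
`G(x,y) = F(x) + (r/2)‖Ax + γW'y − b‖²` satisfies, for `y' − y ∈ range W'`, the Bregman
divergence lower bound
`D_G(x',y';x,y) ≥ (μ_f/2)·min{1/2, (μ_A+L_A)/(4L_A)}·(‖x'−x‖² + ‖y'−y‖²)`.
Here squared norms and inner products are written via `⬝ᵥ`, `F` is `μ_f`-strongly convex
and `L_f`-smooth with gradient `gF`, `σ_max²(A) ≤ L_A`, `W'` is symmetric PSD with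
`λ_min⁺(W')² ≥ μ_{W'}` and `λ_max(W')² ≤ L_{W'}`, and the gradient of `G` at `(x,y)` is
`(gF x + r·Aᵀ(res), rγ·W'(res))` with `res = Ax + γW'y − b`. -/
theorem stmt5 (d p : ℕ) (μf Lf LA μA LW μW r γ : ℝ)
    (hμf : 0 < μf) (hμfLf : μf ≤ Lf) (hμA : 0 < μA) (hμALA : μA ≤ LA)
    (hμW : 0 < μW) (hμWLW : μW ≤ LW)
    (F : (Fin d → ℝ) → ℝ) (gF : (Fin d → ℝ) → (Fin d → ℝ))
    (hF : ∀ x x' : Fin d → ℝ,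
      μf / 2 * ((x' - x) ⬝ᵥ (x' - x)) ≤ F x' - F x - (gF x ⬝ᵥ (x' - x)) ∧
      F x' - F x - (gF x ⬝ᵥ (x' - x)) ≤ Lf / 2 * ((x' - x) ⬝ᵥ (x' - x)))
    (A : Matrix (Fin p) (Fin d) ℝ)
    (hA : ∀ v : Fin d → ℝ, (A.mulVec v) ⬝ᵥ (A.mulVec v) ≤ LA * (v ⬝ᵥ v))
    (W' : Matrix (Fin p) (Fin p) ℝ) (hWsymm : W'ᵀ = W') (hWpsd : W'.PosSemidef)
    (hWlow : ∀ y ∈ Set.range W'.mulVec,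
      μW * (y ⬝ᵥ y) ≤ (W'.mulVec y) ⬝ᵥ (W'.mulVec y))
    (hWhigh : ∀ y : Fin p → ℝ, (W'.mulVec y) ⬝ᵥ (W'.mulVec y) ≤ LW * (y ⬝ᵥ y))
    (hr : r = μf / (2 * LA)) (hγ : 0 ≤ γ) (hγ2 : γ ^ 2 = (μA + LA) / μW)
    (b : Fin p → ℝ)
    (G : (Fin d → ℝ) → (Fin p → ℝ) → ℝ)
    (hG : ∀ x y, G x y = F x +
      r / 2 * ((A.mulVec x + γ • W'.mulVec y - b) ⬝ᵥ (A.mulVec x + γ • W'.mulVec y - b))) :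
    ∀ (x x' : Fin d → ℝ) (y y' : Fin p → ℝ), (∃ w, y' - y = W'.mulVec w) →
      μf / 2 * min (1 / 2) ((μA + LA) / (4 * LA))
          * ((x' - x) ⬝ᵥ (x' - x) + (y' - y) ⬝ᵥ (y' - y))
        ≤ G x' y' - G x y
          - ((gF x + r • Aᵀ.mulVec (A.mulVec x + γ • W'.mulVec y - b)) ⬝ᵥ (x' - x))
          - (((r * γ) • W'.mulVec (A.mulVec x + γ • W'.mulVec y - b)) ⬝ᵥ (y' - y)) := by
  intro x x' y y' hrange
  obtain ⟨w, hw⟩ := hrange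
  have hw' : y' - y ∈ Set.range W'.mulVec := ⟨w, hw.symm⟩
  have hLA : 0 < LA := lt_of_lt_of_le hμA hμALA
  have key : G x' y' - G x y
      - ((gF x + r • Aᵀ.mulVec (A.mulVec x + γ • W'.mulVec y - b)) ⬝ᵥ (x' - x))
      - (((r * γ) • W'.mulVec (A.mulVec x + γ • W'.mulVec y - b)) ⬝ᵥ (y' - y))
      = (F x' - F x - gF x ⬝ᵥ (x' - x)) + r / 2 *
        ((A.mulVec (x' - x) + γ • W'.mulVec (y' - y)) ⬝ᵥ
          (A.mulVec (x' - x) + γ • W'.mulVec (y' - y))) := by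
    rw [hG, hG, add_dotProduct]
    linear_combination stmt5_key_aux A W' hWsymm x x' y y' b r γ
  rw [key]
  have hDF := (hF x x').1
  have hABound := hA (x' - x)
  have hWBound := hWlow (y' - y) hw'
  have hq1 := stmt5_dp_lower (A.mulVec (x' - x)) (γ • W'.mulVec (y' - y))
  have hγW : (γ • W'.mulVec (y' - y)) ⬝ᵥ (γ • W'.mulVec (y' - y))
      = γ ^ 2 * ((W'.mulVec (y' - y)) ⬝ᵥ (W'.mulVec (y' - y))) := by
    rw [smul_dotProduct, dotProduct_smul, smul_eq_mul, smul_eq_mul]; ring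
  rw [hγW] at hq1
  have hU := stmt5_dp_nonneg (x' - x)
  have hV := stmt5_dp_nonneg (y' - y)
  generalize hUdef : (x' - x) ⬝ᵥ (x' - x) = U at hDF hABound hU ⊢
  generalize hVdef : (y' - y) ⬝ᵥ (y' - y) = V at hWBound hV ⊢
  generalize hDdef : F x' - F x - gF x ⬝ᵥ (x' - x) = D at hDF ⊢
  generalize hQdef : (A.mulVec (x' - x) + γ • W'.mulVec (y' - y)) ⬝ᵥ
      (A.mulVec (x' - x) + γ • W'.mulVec (y' - y)) = Q at hq1 ⊢
  generalize hWWdef : (W'.mulVec (y' - y)) ⬝ᵥ (W'.mulVec (y' - y)) = WW at hWBound hq1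
  generalize hAAdef : (A.mulVec (x' - x)) ⬝ᵥ (A.mulVec (x' - x)) = AA at hABound hq1
  have hγ2' : γ ^ 2 * μW = μA + LA := by
    rw [hγ2]; field_simp
  have hrpos : 0 < r := by rw [hr]; positivity
  have hmin1 : min (1 / 2 : ℝ) ((μA + LA) / (4 * LA)) ≤ 1 / 2 := min_le_left _ _
  have hmin2 : min (1 / 2 : ℝ) ((μA + LA) / (4 * LA)) ≤ (μA + LA) / (4 * LA) :=
    min_le_right _ _
  have hQlow : 1 / 2 * (γ ^ 2 * (μW * V)) - LA * U ≤ Q := by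
    have h1 : γ ^ 2 * (μW * V) ≤ γ ^ 2 * WW :=
      mul_le_mul_of_nonneg_left hWBound (sq_nonneg γ)
    linarith
  have hstep : μf / 2 * U + r / 2 * (1 / 2 * (γ ^ 2 * (μW * V)) - LA * U)
      ≤ D + r / 2 * Q := by
    nlinarith [hrpos.le, hQlow, hDF]
  refine le_trans ?_ hstep
  have hrw : γ ^ 2 * (μW * V) = (μA + LA) * V := by
    rw [← hγ2']; ring
  have heq : μf / (2 * LA) / 2 * (1 / 2 * ((μA + LA) * V) - LA * U)
      = μf / 2 * ((μA + LA) / (4 * LA)) * V - μf / 4 * U := by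
    field_simp; ring
  rw [hr, hrw, heq]
  have hc1 : μf / 2 * min (1 / 2) ((μA + LA) / (4 * LA)) * U ≤ μf / 4 * U := by
    have h := mul_le_mul_of_nonneg_right
      (mul_le_mul_of_nonneg_left hmin1 (by positivity : (0:ℝ) ≤ μf / 2)) hU
    linarith
  have hc2 : μf / 2 * min (1 / 2) ((μA + LA) / (4 * LA)) * V
      ≤ μf / 2 * ((μA + LA) / (4 * LA)) * V := by
    have h := mul_le_mul_of_nonneg_right
      (mul_le_mul_of_nonneg_left hmin2 (by positivity : (0:ℝ) ≤ μf / 2)) hV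
    linarith
  linarith [hc1, hc2]
end

section
/- In the setting of the previous statement, the Bregman divergence of G satisfies the upper bound D_G(x',y'; x,y) ≤ (1/2)·max{L_f + μ_f, μ_f·((μ_A + L_A)/L_A)·(L_{W'}/μ_{W'})}·(‖x'−x‖² + ‖y'−y‖²) for all x, x', y, y'. -/
open Matrix

/-- Lemma 1, upper bound: with `r = μ_f/(2L_A)`, `γ² = (μ_A+L_A)/μ_{W'}`,
`G(x,y) = F(x) + (r/2)‖Ax + γW'y − b‖²` satisfies, for all `x,x',y,y'`, the Bregman divergence upper bound
`D_G(x',y';x,y) ≤ (1/2)·max{L_f+μ_f, μ_f·((μ_A+L_A)/L_A)·(L_{W'}/μ_{W'})}·(‖x'−x‖² + ‖y'−y‖²)`.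
Here squared norms and inner products are written via `⬝ᵥ`, `F` is `μ_f`-strongly convex
and `L_f`-smooth with gradient `gF`, `σ_max²(A) ≤ L_A`, `W'` is symmetric PSD with
`λ_min⁺(W')² ≥ μ_{W'}` and `λ_max(W')² ≤ L_{W'}`, and the gradient of `G` at `(x,y)` is
`(gF x + r·Aᵀ(res), rγ·W'(res))` with `res = Ax + γW'y − b`. -/
theorem stmt6 (d p : ℕ) (μf Lf LA μA LW μW r γ : ℝ)
    (hμf : 0 < μf) (hμfLf : μf ≤ Lf) (hμA : 0 < μA) (hμALA : μA ≤ LA)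
    (hμW : 0 < μW) (hμWLW : μW ≤ LW)
    (F : (Fin d → ℝ) → ℝ) (gF : (Fin d → ℝ) → (Fin d → ℝ))
    (hF : ∀ x x' : Fin d → ℝ,
      μf / 2 * ((x' - x) ⬝ᵥ (x' - x)) ≤ F x' - F x - (gF x ⬝ᵥ (x' - x)) ∧
      F x' - F x - (gF x ⬝ᵥ (x' - x)) ≤ Lf / 2 * ((x' - x) ⬝ᵥ (x' - x)))
    (A : Matrix (Fin p) (Fin d) ℝ)
    (hA : ∀ v : Fin d → ℝ, (A.mulVec v) ⬝ᵥ (A.mulVec v) ≤ LA * (v ⬝ᵥ v))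
    (W' : Matrix (Fin p) (Fin p) ℝ) (hWsymm : W'ᵀ = W') (hWpsd : W'.PosSemidef)
    (hWlow : ∀ y ∈ Set.range W'.mulVec,
      μW * (y ⬝ᵥ y) ≤ (W'.mulVec y) ⬝ᵥ (W'.mulVec y))
    (hWhigh : ∀ y : Fin p → ℝ, (W'.mulVec y) ⬝ᵥ (W'.mulVec y) ≤ LW * (y ⬝ᵥ y))
    (hr : r = μf / (2 * LA)) (hγ : 0 ≤ γ) (hγ2 : γ ^ 2 = (μA + LA) / μW)
    (b : Fin p → ℝ)
    (G : (Fin d → ℝ) → (Fin p → ℝ) → ℝ)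
    (hG : ∀ x y, G x y = F x +
      r / 2 * ((A.mulVec x + γ • W'.mulVec y - b) ⬝ᵥ (A.mulVec x + γ • W'.mulVec y - b))) :
    ∀ (x x' : Fin d → ℝ) (y y' : Fin p → ℝ),
      G x' y' - G x y
          - ((gF x + r • Aᵀ.mulVec (A.mulVec x + γ • W'.mulVec y - b)) ⬝ᵥ (x' - x))
          - (((r * γ) • W'.mulVec (A.mulVec x + γ • W'.mulVec y - b)) ⬝ᵥ (y' - y))
        ≤ 1 / 2 * max (Lf + μf) (μf * ((μA + LA) / LA) * (LW / μW))
          * ((x' - x) ⬝ᵥ (x' - x) + (y' - y) ⬝ᵥ (y' - y)) := by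
  intro x x' y y'
  have hLA : 0 < LA := lt_of_lt_of_le hμA hμALA
  have hrpos : 0 < r := by rw [hr]; positivity
  set Δx := x' - x with hΔx
  set Δy := y' - y with hΔy
  set u := A.mulVec x + γ • W'.mulVec y - b with hu
  set a := A.mulVec Δx with ha
  set w := W'.mulVec Δy with hw
  have hv : A.mulVec x' + γ • W'.mulVec y' - b = u + (a + γ • w) := by
    rw [hu, ha, hw, hΔx, hΔy, Matrix.mulVec_sub, Matrix.mulVec_sub, smul_sub]
    abel
  -- inner product rewrites
  have h1 : Aᵀ.mulVec u ⬝ᵥ Δx = u ⬝ᵥ a := by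
    rw [ha, Matrix.mulVec_transpose, ← Matrix.dotProduct_mulVec]
  have h2 : W'.mulVec u ⬝ᵥ Δy = u ⬝ᵥ w := by
    rw [hw]
    conv_lhs => rw [← hWsymm]
    rw [Matrix.mulVec_transpose, ← Matrix.dotProduct_mulVec]
  -- self dot products nonneg
  have sdn : ∀ (n : ℕ) (z : Fin n → ℝ), 0 ≤ z ⬝ᵥ z := by
    intro n z
    exact Finset.sum_nonneg fun i _ => mul_self_nonneg _
  have e1 : (u + (a + γ • w)) ⬝ᵥ (u + (a + γ • w))
      = u ⬝ᵥ u + 2 * (u ⬝ᵥ a) + 2 * γ * (u ⬝ᵥ w) + (a + γ • w) ⬝ᵥ (a + γ • w) := by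
    simp only [dotProduct_add, add_dotProduct, dotProduct_smul,
      smul_dotProduct, dotProduct_comm a u, dotProduct_comm w u,
      dotProduct_comm w a, smul_eq_mul]
    ring
  -- Bregman of quadratic part
  have key : G x' y' - G x y
      - ((gF x + r • Aᵀ.mulVec u) ⬝ᵥ Δx) - (((r * γ) • W'.mulVec u) ⬝ᵥ Δy)
      = (F x' - F x - gF x ⬝ᵥ Δx)
        + r / 2 * ((a + γ • w) ⬝ᵥ (a + γ • w)) := by
    have h3 : (gF x + r • Aᵀ.mulVec u) ⬝ᵥ Δx = gF x ⬝ᵥ Δx + r * (u ⬝ᵥ a) := by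
      rw [add_dotProduct, smul_dotProduct, h1, smul_eq_mul]
    have h4 : ((r * γ) • W'.mulVec u) ⬝ᵥ Δy = r * γ * (u ⬝ᵥ w) := by
      rw [smul_dotProduct, h2, smul_eq_mul]
    rw [hG, hG, hv, ← hu, e1, h3, h4]
    ring
  rw [key]
  -- bound the quadratic part
  have hcross : 2 * γ * (a ⬝ᵥ w) ≤ a ⬝ᵥ a + γ ^ 2 * (w ⬝ᵥ w) := by
    have h0 : 0 ≤ (a - γ • w) ⬝ᵥ (a - γ • w) := sdn p _
    have e : (a - γ • w) ⬝ᵥ (a - γ • w)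
        = a ⬝ᵥ a - 2 * γ * (a ⬝ᵥ w) + γ ^ 2 * (w ⬝ᵥ w) := by
      simp only [dotProduct_sub, sub_dotProduct, dotProduct_smul,
        smul_dotProduct, dotProduct_comm w a, smul_eq_mul]
      ring
    linarith [e ▸ h0]
  have hq : (a + γ • w) ⬝ᵥ (a + γ • w) ≤ 2 * (a ⬝ᵥ a) + 2 * γ ^ 2 * (w ⬝ᵥ w) := by
    have e : (a + γ • w) ⬝ᵥ (a + γ • w)
        = a ⬝ᵥ a + 2 * γ * (a ⬝ᵥ w) + γ ^ 2 * (w ⬝ᵥ w) := by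
      simp only [dotProduct_add, add_dotProduct, dotProduct_smul,
        smul_dotProduct, dotProduct_comm w a, smul_eq_mul]
      ring
    linarith [hcross]
  have haa : a ⬝ᵥ a ≤ LA * (Δx ⬝ᵥ Δx) := hA Δx
  have hww : w ⬝ᵥ w ≤ LW * (Δy ⬝ᵥ Δy) := hWhigh Δy
  have hDF : F x' - F x - gF x ⬝ᵥ Δx ≤ Lf / 2 * (Δx ⬝ᵥ Δx) := (hF x x').2
  have hx2 : 0 ≤ Δx ⬝ᵥ Δx := sdn d Δx
  have hy2 : 0 ≤ Δy ⬝ᵥ Δy := sdn p Δy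
  -- coefficients
  have hrLA : r * LA = μf / 2 := by
    rw [hr]; field_simp
  have hLA0 : LA ≠ 0 := ne_of_gt hLA
  have hμW0 : μW ≠ 0 := ne_of_gt hμW
  have hrg : r * γ ^ 2 * LW = 1 / 2 * (μf * ((μA + LA) / LA) * (LW / μW)) := by
    rw [hr, hγ2]
    field_simp
  set M := max (Lf + μf) (μf * ((μA + LA) / LA) * (LW / μW)) with hM
  have hM1 : Lf + μf ≤ M := le_max_left _ _
  have hM2 : μf * ((μA + LA) / LA) * (LW / μW) ≤ M := le_max_right _ _
  have step1 : r / 2 * ((a + γ • w) ⬝ᵥ (a + γ • w))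
      ≤ r * LA * (Δx ⬝ᵥ Δx) + r * γ ^ 2 * LW * (Δy ⬝ᵥ Δy) :=
    calc r / 2 * ((a + γ • w) ⬝ᵥ (a + γ • w))
        ≤ r / 2 * (2 * (a ⬝ᵥ a) + 2 * γ ^ 2 * (w ⬝ᵥ w)) := by
          apply mul_le_mul_of_nonneg_left hq (by positivity)
      _ = r * (a ⬝ᵥ a) + r * γ ^ 2 * (w ⬝ᵥ w) := by ring
      _ ≤ r * (LA * (Δx ⬝ᵥ Δx)) + r * γ ^ 2 * (LW * (Δy ⬝ᵥ Δy)) := by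
          apply add_le_add
          · exact mul_le_mul_of_nonneg_left haa hrpos.le
          · exact mul_le_mul_of_nonneg_left hww (by positivity)
      _ = r * LA * (Δx ⬝ᵥ Δx) + r * γ ^ 2 * LW * (Δy ⬝ᵥ Δy) := by ring
  calc F x' - F x - gF x ⬝ᵥ Δx + r / 2 * ((a + γ • w) ⬝ᵥ (a + γ • w))
      ≤ Lf / 2 * (Δx ⬝ᵥ Δx) + (r * LA * (Δx ⬝ᵥ Δx) + r * γ ^ 2 * LW * (Δy ⬝ᵥ Δy)) := by
        linarith
    _ = (Lf + μf) / 2 * (Δx ⬝ᵥ Δx)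
        + 1 / 2 * (μf * ((μA + LA) / LA) * (LW / μW)) * (Δy ⬝ᵥ Δy) := by
        rw [hrLA, hrg]; ring
    _ ≤ M / 2 * (Δx ⬝ᵥ Δx) + M / 2 * (Δy ⬝ᵥ Δy) := by
        have t1 : (Lf + μf) / 2 * (Δx ⬝ᵥ Δx) ≤ M / 2 * (Δx ⬝ᵥ Δx) := by
          apply mul_le_mul_of_nonneg_right _ hx2; linarith
        have t2 : 1 / 2 * (μf * ((μA + LA) / LA) * (LW / μW)) * (Δy ⬝ᵥ Δy)
            ≤ M / 2 * (Δy ⬝ᵥ Δy) := by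
          apply mul_le_mul_of_nonneg_right _ hy2; linarith
        linarith
    _ = 1 / 2 * M * ((Δx ⬝ᵥ Δx) + (Δy ⬝ᵥ Δy)) := by ring
end

section
/- Let A = diag(A_1,...,A_n) with A_i ∈ ℝ^{m×d_i} and suppose λ_min⁺(S) ≥ μ_A where S = (1/n)∑ A_iA_iᵀ, and σ_max²(A_i) ≤ L_A for all i. Let W' ∈ ℝ^{mn×mn} be symmetric PSD with range W' = L_m^⊥ and λ_min⁺(W')² ≥ μ_{W'}, and set γ² = (μ_A + L_A)/μ_{W'}. Then for B = [A γW'], every z in the orthogonal complement of ker Bᵀ satisfies ‖Bᵀ z‖² ≥ (μ_A/2)‖z‖², i.e., σ_min⁺²(B) ≥ μ_A/2. -/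
open Matrix

lemma dp_self_nonneg {ι : Type*} [Fintype ι] (v : ι → ℝ) : 0 ≤ v ⬝ᵥ v :=
  Finset.sum_nonneg fun i _ => mul_self_nonneg (v i)

lemma dp_cs {ι : Type*} [Fintype ι] (u v : ι → ℝ) : (u ⬝ᵥ v)^2 ≤ (u ⬝ᵥ u) * (v ⬝ᵥ v) := by
  have := Finset.sum_mul_sq_le_sq_mul_sq Finset.univ u v
  simpa [dotProduct, pow_two] using this

lemma dp_transpose_bound {ι κ : Type*} [Fintype ι] [Fintype κ]
    (M : Matrix ι κ ℝ) (L : ℝ) (hL : 0 ≤ L)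
    (hM : ∀ v : κ → ℝ, (M *ᵥ v) ⬝ᵥ (M *ᵥ v) ≤ L * (v ⬝ᵥ v)) (u : ι → ℝ) :
    (Mᵀ *ᵥ u) ⬝ᵥ (Mᵀ *ᵥ u) ≤ L * (u ⬝ᵥ u) := by
  set v := Mᵀ *ᵥ u with hv
  have ht : v ⬝ᵥ v = u ⬝ᵥ (M *ᵥ v) := by
    rw [dotProduct_mulVec u M v, ← mulVec_transpose]
  rcases eq_or_lt_of_le (dp_self_nonneg v) with h0 | h0
  · rw [← h0]; exact mul_nonneg hL (dp_self_nonneg u)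
  · have h1 := dp_cs u (M *ᵥ v)
    have h2 := hM v
    have h3 : (v ⬝ᵥ v)^2 ≤ (u ⬝ᵥ u) * (L * (v ⬝ᵥ v)) := by
      calc (v ⬝ᵥ v)^2 = (u ⬝ᵥ (M *ᵥ v))^2 := by rw [← ht]
        _ ≤ (u ⬝ᵥ u) * ((M *ᵥ v) ⬝ᵥ (M *ᵥ v)) := h1
        _ ≤ (u ⬝ᵥ u) * (L * (v ⬝ᵥ v)) := mul_le_mul_of_nonneg_left h2 (dp_self_nonneg u)
    nlinarith [dp_self_nonneg u]

lemma half_bound {ι : Type*} [Fintype ι] (a b : ι → ℝ) :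
    1/2*(a ⬝ᵥ a) - b ⬝ᵥ b ≤ (a + b) ⬝ᵥ (a + b) := by
  have h1 : 0 ≤ (a + b + b) ⬝ᵥ (a + b + b) := dp_self_nonneg _
  simp only [add_dotProduct, dotProduct_add] at h1 ⊢
  rw [dotProduct_comm b a] at h1 ⊢
  linarith

lemma sum_mulVec' {ι κ σ : Type*} [Fintype ι] [Fintype κ] [Fintype σ]
    (M : σ → Matrix ι κ ℝ) (v : κ → ℝ) :
    (∑ j, M j) *ᵥ v = ∑ j, (M j) *ᵥ v := by
  ext r
  simp only [mulVec, dotProduct, Matrix.sum_apply, Finset.sum_apply, Finset.sum_mul]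
  rw [Finset.sum_comm]

lemma sum_dotProduct' {ι σ : Type*} [Fintype ι] [Fintype σ]
    (f : σ → ι → ℝ) (v : ι → ℝ) :
    (∑ j, f j) ⬝ᵥ v = ∑ j, (f j) ⬝ᵥ v := by
  simp only [dotProduct, Finset.sum_apply, Finset.sum_mul]
  rw [Finset.sum_comm]

/-- Lemma 2, lower bound: for `A = diag(A₁,...,Aₙ)` with
`λ_min⁺(S) ≥ μ_A` (`S = (1/n)∑ AᵢAᵢᵀ`), `σ_max²(Aᵢ) ≤ L_A`, and `W'` symmetric PSD
with `range W' = L_m^⊥` and `λ_min⁺(W')² ≥ μ_{W'}`, `γ² = (μ_A+L_A)/μ_{W'}`,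
every `z ⊥ ker Bᵀ` (for `B = [A γW']`) satisfies `‖Bᵀz‖² ≥ (μ_A/2)‖z‖²`. -/
theorem stmt8 (n m : ℕ) (hn : 0 < n) (d : Fin n → ℕ) (LA μA LW μW γ : ℝ)
    (hμA : 0 < μA) (hμALA : μA ≤ LA) (hμW : 0 < μW) (hμWLW : μW ≤ LW)
    (Ab : ∀ i : Fin n, Matrix (Fin m) (Fin (d i)) ℝ)
    (A : Matrix (Fin n × Fin m) ((i : Fin n) × Fin (d i)) ℝ)
    (hAdiag : A = Matrix.of fun p q => if p.1 = q.1 then Ab q.1 p.2 q.2 else 0)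
    (hAi : ∀ (i : Fin n) (v : Fin (d i) → ℝ),
      ((Ab i).mulVec v) ⬝ᵥ ((Ab i).mulVec v) ≤ LA * (v ⬝ᵥ v))
    (S : Matrix (Fin m) (Fin m) ℝ) (hS : S = ((1 : ℝ) / n) • ∑ i, Ab i * (Ab i)ᵀ)
    (hSmin : ∀ w : Fin m → ℝ, (∀ v, S.mulVec v = 0 → w ⬝ᵥ v = 0) →
      μA * (w ⬝ᵥ w) ≤ w ⬝ᵥ S.mulVec w)
    (W' : Matrix (Fin n × Fin m) (Fin n × Fin m) ℝ)
    (hWsymm : W'ᵀ = W') (hWpsd : W'.PosSemidef)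
    (hWrange : Set.range W'.mulVec
      = {y : Fin n × Fin m → ℝ | ∀ c : Fin m, ∑ i, y (i, c) = 0})
    (hWlow : ∀ y ∈ Set.range W'.mulVec,
      μW * (y ⬝ᵥ y) ≤ (W'.mulVec y) ⬝ᵥ (W'.mulVec y))
    (hγ2 : γ ^ 2 = (μA + LA) / μW)
    (B : Matrix (Fin n × Fin m) (((i : Fin n) × Fin (d i)) ⊕ (Fin n × Fin m)) ℝ)
    (hB : B = Matrix.fromCols A (γ • W')) :
    ∀ z : Fin n × Fin m → ℝ,
      (∀ w : Fin n × Fin m → ℝ, Bᵀ.mulVec w = 0 → z ⬝ᵥ w = 0) →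
      μA / 2 * (z ⬝ᵥ z) ≤ (Bᵀ.mulVec z) ⬝ᵥ (Bᵀ.mulVec z) := by
  intro z hz
  have hn' : (0:ℝ) < (n:ℝ) := by exact_mod_cast hn
  -- consensus decomposition
  set w : Fin m → ℝ := fun c => (∑ i, z (i, c)) / n with hw
  set z1 : Fin n × Fin m → ℝ := fun p => z p - w p.2 with hz1
  have hz1sum : ∀ c, ∑ i : Fin n, z1 (i, c) = 0 := by
    intro c
    simp only [hz1, Finset.sum_sub_distrib, hw, Finset.sum_const, Finset.card_univ,
      Fintype.card_fin, nsmul_eq_mul]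
    field_simp
    ring
  have hz1mem : z1 ∈ Set.range W'.mulVec := by
    rw [hWrange]; exact hz1sum
  -- W' kills i-constant vectors
  have hWkill : ∀ f : Fin m → ℝ, W' *ᵥ (fun p : Fin n × Fin m => f p.2) = 0 := by
    intro f
    have horth : ∀ u ∈ Set.range W'.mulVec,
        u ⬝ᵥ (fun p : Fin n × Fin m => f p.2) = 0 := by
      intro u hu
      rw [hWrange] at hu
      simp only [Set.mem_setOf_eq] at hu
      have : u ⬝ᵥ (fun p : Fin n × Fin m => f p.2)
          = ∑ c : Fin m, (∑ i : Fin n, u (i, c)) * f c := by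
        rw [dotProduct, Fintype.sum_prod_type, Finset.sum_comm]
        simp [Finset.sum_mul]
      rw [this]
      exact Finset.sum_eq_zero fun c _ => by rw [hu c, zero_mul]
    have hzero : (W' *ᵥ (fun p : Fin n × Fin m => f p.2))
        ⬝ᵥ (W' *ᵥ (fun p : Fin n × Fin m => f p.2)) = 0 := by
      have h1 : (W' *ᵥ (fun p : Fin n × Fin m => f p.2))
          ⬝ᵥ (W' *ᵥ (fun p : Fin n × Fin m => f p.2))
          = (W' *ᵥ (W' *ᵥ (fun p : Fin n × Fin m => f p.2)))
              ⬝ᵥ (fun p : Fin n × Fin m => f p.2) := by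
        rw [dotProduct_mulVec, ← mulVec_transpose, hWsymm]
      rw [h1]
      exact horth _ ⟨_, rfl⟩
    exact dotProduct_self_eq_zero.mp hzero
  -- Bᵀ structure
  have hBT : ∀ v : Fin n × Fin m → ℝ,
      Bᵀ *ᵥ v = Sum.elim (Aᵀ *ᵥ v) (γ • (W' *ᵥ v)) := by
    intro v
    rw [hB, transpose_fromCols, fromRows_mulVec, transpose_smul, hWsymm, smul_mulVec]
  have hnormB : (Bᵀ *ᵥ z) ⬝ᵥ (Bᵀ *ᵥ z)
        = (Aᵀ *ᵥ z) ⬝ᵥ (Aᵀ *ᵥ z) + γ^2 * ((W' *ᵥ z) ⬝ᵥ (W' *ᵥ z)) := by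
    rw [hBT, sumElim_dotProduct_sumElim, smul_dotProduct, dotProduct_smul,
      smul_eq_mul, smul_eq_mul]
    ring
  -- block structure of Aᵀ
  have hAT : ∀ (v : Fin n × Fin m → ℝ) (i : Fin n) (q : Fin (d i)),
      (Aᵀ *ᵥ v) ⟨i, q⟩ = ((Ab i)ᵀ *ᵥ (fun c => v (i, c))) q := by
    intro v i q
    simp only [hAdiag, mulVec, dotProduct, transpose_apply, of_apply,
      Fintype.sum_prod_type, ite_mul, zero_mul]
    rw [Finset.sum_comm]
    simp [Finset.sum_ite_eq']
  have hATdot : ∀ v : Fin n × Fin m → ℝ,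
      (Aᵀ *ᵥ v) ⬝ᵥ (Aᵀ *ᵥ v)
        = ∑ i, ((Ab i)ᵀ *ᵥ (fun c => v (i, c))) ⬝ᵥ ((Ab i)ᵀ *ᵥ (fun c => v (i, c))) := by
    intro v
    rw [dotProduct, ← Finset.univ_sigma_univ, Finset.sum_sigma]
    exact Finset.sum_congr rfl fun i _ => by
      rw [dotProduct]
      exact Finset.sum_congr rfl fun q _ => by rw [hAT]
  -- block quadratic form identity
  have hquad : ∀ (i : Fin n) (u : Fin m → ℝ),
      ((Ab i)ᵀ *ᵥ u) ⬝ᵥ ((Ab i)ᵀ *ᵥ u) = ((Ab i * (Ab i)ᵀ) *ᵥ u) ⬝ᵥ u := by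
    intro i u
    rw [dotProduct_mulVec, vecMul_transpose, ← mulVec_mulVec]
  -- S v = 0 implies blocks kill v
  have hSker : ∀ v : Fin m → ℝ, S *ᵥ v = 0 → ∀ i, (Ab i)ᵀ *ᵥ v = 0 := by
    intro v hv i
    have hMv : (∑ j, Ab j * (Ab j)ᵀ) *ᵥ v = 0 := by
      have h0 : ((1:ℝ)/n) • ((∑ j, Ab j * (Ab j)ᵀ) *ᵥ v) = 0 := by
        rw [← smul_mulVec, ← hS, hv]
      have hne : (1:ℝ)/n ≠ 0 := by positivity
      exact (smul_eq_zero.mp h0).resolve_left hne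
    have hsum : ∑ j, ((Ab j)ᵀ *ᵥ v) ⬝ᵥ ((Ab j)ᵀ *ᵥ v) = 0 := by
      have e1 : ∑ j, ((Ab j * (Ab j)ᵀ) *ᵥ v) ⬝ᵥ v = 0 := by
        rw [← sum_dotProduct', ← sum_mulVec', hMv, zero_dotProduct]
      rw [← e1]
      exact Finset.sum_congr rfl fun j _ => hquad j v
    have := (Finset.sum_eq_zero_iff_of_nonneg
      (fun j _ => dp_self_nonneg ((Ab j)ᵀ *ᵥ v))).mp hsum i (Finset.mem_univ i)
    exact dotProduct_self_eq_zero.mp this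
  -- S-kernel orthogonality for w
  have hwperp : ∀ v : Fin m → ℝ, S *ᵥ v = 0 → w ⬝ᵥ v = 0 := by
    intro v hv
    have hb := hSker v hv
    have hyA : Aᵀ *ᵥ (fun p : Fin n × Fin m => v p.2) = 0 := by
      funext x
      obtain ⟨i, q⟩ := x
      rw [hAT]
      show ((Ab i)ᵀ *ᵥ v) q = 0
      rw [hb i]
      rfl
    have hyB : Bᵀ *ᵥ (fun p : Fin n × Fin m => v p.2) = 0 := by
      rw [hBT, hyA, hWkill v]
      funext x
      cases x <;> simp
    have hzy := hz _ hyB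
    have hcomp : z ⬝ᵥ (fun p : Fin n × Fin m => v p.2) = n * (w ⬝ᵥ v) := by
      rw [dotProduct, Fintype.sum_prod_type, Finset.sum_comm, dotProduct, Finset.mul_sum]
      refine Finset.sum_congr rfl fun c _ => ?_
      show ∑ x : Fin n, z (x, c) * v c = (n:ℝ) * (w c * v c)
      rw [← Finset.sum_mul]
      simp only [hw]
      field_simp
    rw [hcomp] at hzy
    have := mul_eq_zero.mp hzy
    rcases this with h | h
    · exact absurd h (ne_of_gt hn')
    · exact h
  have hSw := hSmin w hwperp
  -- sum of squares of blocks applied to w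
  have hSsum : ∑ i, ((Ab i)ᵀ *ᵥ w) ⬝ᵥ ((Ab i)ᵀ *ᵥ w) = n * (w ⬝ᵥ S *ᵥ w) := by
    have e1 : ∑ i, ((Ab i)ᵀ *ᵥ w) ⬝ᵥ ((Ab i)ᵀ *ᵥ w)
        = ((∑ i, Ab i * (Ab i)ᵀ) *ᵥ w) ⬝ᵥ w := by
      rw [sum_mulVec', sum_dotProduct']
      exact Finset.sum_congr rfl fun i _ => hquad i w
    rw [e1, hS, smul_mulVec, dotProduct_smul, smul_eq_mul, dotProduct_comm]
    field_simp
  -- W part lower bound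
  have hWzeq : W' *ᵥ z = W' *ᵥ z1 := by
    have hdec : z = z1 + (fun p : Fin n × Fin m => w p.2) := by
      funext p; simp [hz1]
    conv_lhs => rw [hdec]
    rw [mulVec_add, hWkill w, add_zero]
  have hWlb : (μA + LA) * (z1 ⬝ᵥ z1) ≤ γ^2 * ((W' *ᵥ z) ⬝ᵥ (W' *ᵥ z)) := by
    rw [hWzeq]
    have h := hWlow z1 hz1mem
    have h2 : γ^2 * (μW * (z1 ⬝ᵥ z1)) ≤ γ^2 * ((W' *ᵥ z1) ⬝ᵥ (W' *ᵥ z1)) :=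
      mul_le_mul_of_nonneg_left h (sq_nonneg γ)
    calc (μA + LA) * (z1 ⬝ᵥ z1) = γ^2 * (μW * (z1 ⬝ᵥ z1)) := by
          rw [hγ2]; field_simp
      _ ≤ _ := h2
  -- A part blockwise lower bound
  have hAlb : ∀ i : Fin n,
      1/2 * (((Ab i)ᵀ *ᵥ w) ⬝ᵥ ((Ab i)ᵀ *ᵥ w))
        - LA * ((fun c => z1 (i, c)) ⬝ᵥ (fun c => z1 (i, c)))
      ≤ ((Ab i)ᵀ *ᵥ (fun c => z (i, c))) ⬝ᵥ ((Ab i)ᵀ *ᵥ (fun c => z (i, c))) := by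
    intro i
    have hsplit : (Ab i)ᵀ *ᵥ (fun c => z (i, c))
        = (Ab i)ᵀ *ᵥ w + (Ab i)ᵀ *ᵥ (fun c => z1 (i, c)) := by
      have harg : (fun c => z (i, c)) = w + (fun c => z1 (i, c)) := by
        funext c; simp [hz1]
      rw [harg, mulVec_add]
    rw [hsplit]
    have h1 := half_bound ((Ab i)ᵀ *ᵥ w) ((Ab i)ᵀ *ᵥ (fun c => z1 (i, c)))
    have h2 := dp_transpose_bound (Ab i) LA (le_trans hμA.le hμALA) (hAi i)
      (fun c => z1 (i, c))
    linarith
  -- z1 norm split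
  have hz1split : z1 ⬝ᵥ z1 = ∑ i, (fun c => z1 (i, c)) ⬝ᵥ (fun c => z1 (i, c)) := by
    simp only [dotProduct]
    rw [Fintype.sum_prod_type]
  -- A part aggregated
  have hAagg : 1/2 * (n * (w ⬝ᵥ S *ᵥ w)) - LA * (z1 ⬝ᵥ z1)
      ≤ (Aᵀ *ᵥ z) ⬝ᵥ (Aᵀ *ᵥ z) := by
    rw [hATdot z, ← hSsum, hz1split]
    calc 1/2 * (∑ i, ((Ab i)ᵀ *ᵥ w) ⬝ᵥ ((Ab i)ᵀ *ᵥ w))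
          - LA * (∑ i, (fun c => z1 (i, c)) ⬝ᵥ (fun c => z1 (i, c)))
        = ∑ i, (1/2 * (((Ab i)ᵀ *ᵥ w) ⬝ᵥ ((Ab i)ᵀ *ᵥ w))
            - LA * ((fun c => z1 (i, c)) ⬝ᵥ (fun c => z1 (i, c)))) := by
          rw [Finset.sum_sub_distrib, Finset.mul_sum, Finset.mul_sum]
      _ ≤ _ := Finset.sum_le_sum fun i _ => hAlb i
  -- z norm split
  have hznorm : z ⬝ᵥ z = z1 ⬝ᵥ z1 + n * (w ⬝ᵥ w) := by
    have hdec : z = z1 + (fun p : Fin n × Fin m => w p.2) := by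
      funext p; simp [hz1]
    have h12 : z1 ⬝ᵥ (fun p : Fin n × Fin m => w p.2) = 0 := by
      rw [dotProduct, Fintype.sum_prod_type, Finset.sum_comm]
      refine Finset.sum_eq_zero fun c _ => ?_
      show ∑ x : Fin n, z1 (x, c) * w c = 0
      rw [← Finset.sum_mul, hz1sum, zero_mul]
    have h22 : (fun p : Fin n × Fin m => w p.2) ⬝ᵥ (fun p : Fin n × Fin m => w p.2)
        = n * (w ⬝ᵥ w) := by
      rw [dotProduct, Fintype.sum_prod_type]
      simp only [Finset.sum_const, Finset.card_univ, Fintype.card_fin, nsmul_eq_mul, dotProduct]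
    have e : z ⬝ᵥ z = (z1 + (fun p : Fin n × Fin m => w p.2))
        ⬝ᵥ (z1 + (fun p : Fin n × Fin m => w p.2)) := by rw [← hdec]
    rw [e, add_dotProduct, dotProduct_add, dotProduct_add,
      dotProduct_comm (fun p : Fin n × Fin m => w p.2) z1, h12, h22]
    ring
  -- assemble
  rw [hnormB]
  have hSw2 : (n:ℝ)/2 * (μA * (w ⬝ᵥ w)) ≤ (n:ℝ)/2 * (w ⬝ᵥ S *ᵥ w) :=
    mul_le_mul_of_nonneg_left hSw (by positivity)
  have hz1nn := dp_self_nonneg z1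
  rw [hznorm]
  nlinarith [hAagg, hWlb, hSw2, hz1nn, hμA]
end

section
/- Let T_n denote the Chebyshev polynomial of the first kind of degree n. For 0 < μ ≤ L, n = ⌈√(L/μ)⌉, and P(t) = 1 − T_n((L + μ − 2t)/(L − μ))/T_n((L + μ)/(L − μ)), we have P(0) = 0 and 11/15 ≤ P(t) ≤ 19/15 for all t ∈ [μ, L]. -/
open Polynomial Polynomial.Chebyshev

/-- Chebyshev `T` at `cosh`. -/
lemma T_real_cosh' (θ : ℝ) (n : ℤ) :
    (Polynomial.Chebyshev.T ℝ n).eval (Real.cosh θ) = Real.cosh (n * θ) := by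
  have h := Polynomial.Chebyshev.T_complex_cos ((θ : ℂ) * Complex.I) n
  rw [Complex.cos_mul_I,
    show (n : ℂ) * ((θ : ℂ) * Complex.I) = ((n * θ : ℝ) : ℂ) * Complex.I by push_cast; ring,
    Complex.cos_mul_I] at h
  exact_mod_cast h

/-- `(1-x) e^{2x} ≤ 1+x` for `x ≥ 0`. -/
lemma one_sub_mul_exp_le (x : ℝ) (hx : 0 ≤ x) : (1 - x) * Real.exp (2 * x) ≤ 1 + x := by
  have hg : ∀ y : ℝ, HasDerivAt (fun y : ℝ => 1 + (2 * y - 1) * Real.exp (2 * y))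
      (4 * y * Real.exp (2 * y)) y := by
    intro y
    have h1 : HasDerivAt (fun y : ℝ => 2 * y) 2 y := by
      simpa using (hasDerivAt_id y).const_mul 2
    have he : HasDerivAt (fun y : ℝ => Real.exp (2 * y)) (Real.exp (2 * y) * 2) y := h1.exp
    have := ((h1.sub_const 1).mul he).const_add 1
    exact this.congr_deriv (by ring)
  have hf : ∀ y : ℝ, HasDerivAt (fun y : ℝ => (1 + y) - (1 - y) * Real.exp (2 * y))
      (1 + (2 * y - 1) * Real.exp (2 * y)) y := by
    intro y
    have h1 : HasDerivAt (fun y : ℝ => 2 * y) 2 y := by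
      simpa using (hasDerivAt_id y).const_mul 2
    have he : HasDerivAt (fun y : ℝ => Real.exp (2 * y)) (Real.exp (2 * y) * 2) y := h1.exp
    have h2 : HasDerivAt (fun y : ℝ => (1 : ℝ) - y) (-1) y := (hasDerivAt_id y).const_sub 1
    have h3 : HasDerivAt (fun y : ℝ => (1 : ℝ) + y) 1 y := by
      simpa using (hasDerivAt_id y).const_add 1
    have := h3.sub (h2.mul he)
    exact this.congr_deriv (by ring)
  have hgmono : MonotoneOn (fun y : ℝ => 1 + (2 * y - 1) * Real.exp (2 * y)) (Set.Ici 0) := by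
    apply monotoneOn_of_deriv_nonneg (convex_Ici 0)
    · exact (by fun_prop : Continuous fun y : ℝ => 1 + (2 * y - 1) * Real.exp (2 * y)).continuousOn
    · intro y _; exact (hg y).differentiableAt.differentiableWithinAt
    · intro y hy
      rw [interior_Ici] at hy
      rw [(hg y).deriv]
      have : (0 : ℝ) < y := hy
      positivity
  have hgnn : ∀ y : ℝ, 0 ≤ y → 0 ≤ 1 + (2 * y - 1) * Real.exp (2 * y) := by
    intro y hy
    have h0 := hgmono Set.self_mem_Ici (by exact hy) hy
    norm_num at h0
    linarith
  have hfmono : MonotoneOn (fun y : ℝ => (1 + y) - (1 - y) * Real.exp (2 * y)) (Set.Ici 0) := by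
    apply monotoneOn_of_deriv_nonneg (convex_Ici 0)
    · exact (by fun_prop :
        Continuous fun y : ℝ => (1 + y) - (1 - y) * Real.exp (2 * y)).continuousOn
    · intro y _; exact (hf y).differentiableAt.differentiableWithinAt
    · intro y hy
      rw [interior_Ici] at hy
      rw [(hf y).deriv]
      exact hgnn y (le_of_lt hy)
  have h0 := hfmono Set.self_mem_Ici (by exact hx) hx
  norm_num at h0
  linarith

/-- `cosh 2 > 15/4`. -/
lemma cosh_two_gt : (15 : ℝ) / 4 < Real.cosh 2 := by
  have he2 : Real.exp 2 = Real.exp 1 * Real.exp 1 := by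
    rw [← Real.exp_add]; norm_num
  have h1 := Real.exp_one_gt_d9
  have h2 := Real.exp_one_lt_d9
  have hpos : (0 : ℝ) < Real.exp 1 := Real.exp_pos 1
  rw [Real.cosh_eq, Real.exp_neg, he2]
  have hu : (7.389056098 : ℝ) < Real.exp 1 * Real.exp 1 := by nlinarith
  have hupos : (0 : ℝ) < Real.exp 1 * Real.exp 1 := by positivity
  rw [lt_div_iff₀ (by norm_num : (0:ℝ) < 2)]
  have hinv : (0 : ℝ) < (Real.exp 1 * Real.exp 1)⁻¹ := by positivity
  nlinarith [mul_pos hinv hupos, inv_mul_cancel₀ (ne_of_gt hupos)]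

/-- Lemma 3: with `T_n` the degree-`n` Chebyshev polynomial of the first
kind, `0 < μ < L`, `n = ⌈√(L/μ)⌉`, and
`P(t) = 1 − T_n((L+μ−2t)/(L−μ)) / T_n((L+μ)/(L−μ))`, one has `P(0) = 0` and
`11/15 ≤ P(t) ≤ 19/15` for all `t ∈ [μ, L]`. -/
theorem stmt9 (μ L : ℝ) (hμ : 0 < μ) (hμL : μ < L)
    (n : ℕ) (hn : n = ⌈Real.sqrt (L / μ)⌉₊)
    (P : ℝ → ℝ)
    (hP : ∀ t : ℝ, P t = 1 -
      ((Polynomial.Chebyshev.T ℝ n).eval ((L + μ - 2 * t) / (L - μ))) /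
      ((Polynomial.Chebyshev.T ℝ n).eval ((L + μ) / (L - μ)))) :
    P 0 = 0 ∧ ∀ t ∈ Set.Icc μ L, 11 / 15 ≤ P t ∧ P t ≤ 19 / 15 := by
  have hLμ : 0 < L - μ := by linarith
  set s : ℝ := Real.sqrt (L / μ) with hs
  have hdivpos : 0 < L / μ := div_pos (by linarith) hμ
  have hdiv1 : 1 < L / μ := (one_lt_div hμ).2 hμL
  have hs1 : 1 < s := by
    rw [hs, show (1:ℝ) = Real.sqrt 1 by simp]
    exact Real.sqrt_lt_sqrt (by norm_num) hdiv1
  have hs2 : s ^ 2 = L / μ := Real.sq_sqrt hdivpos.le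
  have hns : s ≤ (n : ℝ) := by
    rw [hn]; exact_mod_cast Nat.le_ceil s
  set ρ : ℝ := (s + 1) / (s - 1) with hρdef
  have hρ1 : 1 < ρ := by
    rw [hρdef, lt_div_iff₀ (by linarith)]; linarith
  set θ : ℝ := Real.log ρ with hθdef
  have hθpos : 0 < θ := Real.log_pos hρ1
  have hexpθ : Real.exp θ = ρ := Real.exp_log (by linarith)
  -- cosh θ = (L+μ)/(L-μ)
  have hcosh : Real.cosh θ = (L + μ) / (L - μ) := by
    rw [Real.cosh_eq, Real.exp_neg, hexpθ, hρdef]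
    have hsm : s - 1 ≠ 0 := by linarith
    have hsp : s + 1 ≠ 0 := by linarith
    have hL : L = s ^ 2 * μ := by
      field_simp at hs2; linarith [hs2]
    rw [hL]
    have hμn : μ ≠ 0 := ne_of_gt hμ
    have h2 : s ^ 2 * μ - μ ≠ 0 := by
      have : 1 < s ^ 2 := by nlinarith
      have : 0 < s ^ 2 * μ - μ := by nlinarith
      linarith
    have h3 : s ^ 2 - 1 ≠ 0 := by nlinarith
    field_simp
    ring
  -- θ ≥ 2/s
  have hθge : 2 / s ≤ θ := by
    have hx : (0 : ℝ) ≤ 1 / s := by positivity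
    have key := one_sub_mul_exp_le (1 / s) hx
    have hspos : 0 < s := by linarith
    have h2s : 2 * (1 / s) = 2 / s := by ring
    rw [h2s] at key
    have hρge : Real.exp (2 / s) ≤ ρ := by
      rw [hρdef, le_div_iff₀ (by linarith : (0:ℝ) < s - 1)]
      calc Real.exp (2 / s) * (s - 1) = ((1 - 1/s) * Real.exp (2/s)) * s := by
            field_simp
        _ ≤ (1 + 1/s) * s := by
            apply mul_le_mul_of_nonneg_right key (by linarith)
        _ = s + 1 := by field_simp
    calc 2 / s = Real.log (Real.exp (2 / s)) := by rw [Real.log_exp]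
      _ ≤ Real.log ρ := Real.log_le_log (Real.exp_pos _) hρge
  -- n θ ≥ 2
  have hnθ : 2 ≤ (n : ℝ) * θ := by
    have h1 : 2 / s * s = 2 := by field_simp
    have hspos : 0 < s := by linarith
    calc (2:ℝ) = (2 / s) * s := by field_simp
      _ ≤ θ * (n : ℝ) := by
          apply mul_le_mul hθge hns hspos.le hθpos.le
      _ = (n : ℝ) * θ := by ring
  -- value at the right endpoint
  have hTy : (Polynomial.Chebyshev.T ℝ (n : ℤ)).eval ((L + μ) / (L - μ))
      = Real.cosh ((n : ℝ) * θ) := by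
    rw [← hcosh, T_real_cosh' θ (n : ℤ)]
    norm_num
  have hTylb : (15 : ℝ) / 4 < (Polynomial.Chebyshev.T ℝ (n : ℤ)).eval ((L + μ) / (L - μ)) := by
    rw [hTy]
    calc (15 : ℝ) / 4 < Real.cosh 2 := cosh_two_gt
      _ ≤ Real.cosh ((n : ℝ) * θ) := by
          rw [Real.cosh_le_cosh]
          rw [abs_of_nonneg (by norm_num : (0:ℝ) ≤ 2),
            abs_of_nonneg (by nlinarith : (0:ℝ) ≤ (n : ℝ) * θ)]
          exact hnθ
  have hTypos : 0 < (Polynomial.Chebyshev.T ℝ (n : ℤ)).eval ((L + μ) / (L - μ)) := by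
    linarith
  constructor
  · rw [hP 0]
    norm_num
    rw [div_self (ne_of_gt hTypos)]
    ring
  · intro t ht
    obtain ⟨ht1, ht2⟩ := ht
    set x : ℝ := (L + μ - 2 * t) / (L - μ) with hxdef
    have hx1 : -1 ≤ x := by
      rw [hxdef, le_div_iff₀ hLμ]; linarith
    have hx2 : x ≤ 1 := by
      rw [hxdef, div_le_one hLμ]; linarith
    have hTx : |(Polynomial.Chebyshev.T ℝ (n : ℤ)).eval x| ≤ 1 := by
      have hc : Real.cos (Real.arccos x) = x := Real.cos_arccos hx1 hx2
      rw [← hc, Polynomial.Chebyshev.T_real_cos]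
      exact Real.abs_cos_le_one _
    have hinv : ((Polynomial.Chebyshev.T ℝ (n : ℤ)).eval ((L + μ) / (L - μ)))⁻¹ ≤ 4 / 15 := by
      rw [inv_le_comm₀ (by linarith) (by norm_num)]
      linarith [hTylb]
    have hinvpos : 0 < ((Polynomial.Chebyshev.T ℝ (n : ℤ)).eval ((L + μ) / (L - μ)))⁻¹ :=
      inv_pos.2 hTypos
    have hratio : |(Polynomial.Chebyshev.T ℝ (n : ℤ)).eval x /
        (Polynomial.Chebyshev.T ℝ (n : ℤ)).eval ((L + μ) / (L - μ))| ≤ 4 / 15 := by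
      rw [abs_div, abs_of_pos hTypos, div_le_iff₀ hTypos]
      nlinarith [hTx, hTylb]
    rw [abs_le] at hratio
    rw [hP t]
    exact ⟨by linarith [hratio.2], by linarith [hratio.1]⟩
end

section
/- Let M be a symmetric PSD matrix whose nonzero eigenvalues lie in [μ, L] with 0 < μ ≤ L, and let P be a polynomial with P(0) = 0 and 11/15 ≤ P(t) ≤ 19/15 for t ∈ [μ, L]. Then P(M) is symmetric PSD, λ_max(P(M)) ≤ 19/15, λ_min⁺(P(M)) ≥ 11/15, and hence the condition number λ_max(P(M))/λ_min⁺(P(M)) of P(M) is at most 19/11. -/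
open Matrix Polynomial Module.End


private lemma aux_mulVec_aeval {n : Type*} [Fintype n] [DecidableEq n]
    (M : Matrix n n ℝ) (P : Polynomial ℝ) (u : n → ℝ) (t : ℝ)
    (h : M *ᵥ u = t • u) : (Polynomial.aeval M P) *ᵥ u = P.eval t • u := by
  induction P using Polynomial.induction_on with
  | C a =>
      simp [Polynomial.aeval_C, Algebra.algebraMap_eq_smul_one, Matrix.smul_mulVec,
        Matrix.one_mulVec]
  | add p q hp hq => simp [Matrix.add_mulVec, hp, hq, add_smul]
  | monomial k a hk =>
      have h1 : (Polynomial.aeval M) (Polynomial.C a * Polynomial.X ^ (k + 1)) =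
          (Polynomial.aeval M) (Polynomial.C a * Polynomial.X ^ k) * M := by
        rw [pow_succ, ← mul_assoc, _root_.map_mul, Polynomial.aeval_X]
      rw [h1, ← Matrix.mulVec_mulVec, h, Matrix.mulVec_smul, hk, smul_smul]
      congr 1
      simp [pow_succ]
      ring

private lemma aux_smul_isHermitian {n : Type*} [Fintype n]
    {A : Matrix n n ℝ} (hA : A.IsHermitian) (a : ℝ) : (a • A).IsHermitian := by
  have : (a • A)ᴴ = a • Aᴴ := by
    rw [Matrix.conjTranspose_smul]; norm_num
  rw [Matrix.IsHermitian, this, hA.eq]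

private lemma aux_isHermitian_aeval {n : Type*} [Fintype n] [DecidableEq n]
    {M : Matrix n n ℝ} (hM : M.IsHermitian) (P : Polynomial ℝ) :
    (Polynomial.aeval M P).IsHermitian := by
  induction P using Polynomial.induction_on with
  | C a =>
      rw [Polynomial.aeval_C, Algebra.algebraMap_eq_smul_one]
      exact aux_smul_isHermitian Matrix.isHermitian_one a
  | add p q hp hq => simpa using hp.add hq
  | monomial k a hk =>
      have : (Polynomial.aeval M) (Polynomial.C a * Polynomial.X ^ (k + 1)) =
          a • M ^ (k + 1) := by
        rw [_root_.map_mul, Polynomial.aeval_C, map_pow, Polynomial.aeval_X, Algebra.algebraMap_eq_smul_one,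
          smul_mul_assoc, one_mul]
      rw [this]
      exact aux_smul_isHermitian (hM.pow _) a

/-- if `M` is symmetric PSD with nonzero eigenvalues in `[μ, L]` and
`P` is a polynomial with `P(0) = 0` and `11/15 ≤ P(t) ≤ 19/15` on `[μ, L]`, then `P(M)`
is symmetric PSD, `λ_max(P(M)) ≤ 19/15` (as a quadratic-form bound),
`λ_min⁺(P(M)) ≥ 11/15` (quadratic form on the orthogonal complement of the kernel),
and the ratio of any two nonzero eigenvalues of `P(M)` (in particular the condition
number `λ_max/λ_min⁺`) is at most `19/11`. -/
theorem stmt10 (p : ℕ) (μ L : ℝ) (hμ : 0 < μ) (hμL : μ ≤ L)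
    (M : Matrix (Fin p) (Fin p) ℝ) (hM : M.PosSemidef)
    (hEig : ∀ t : ℝ, t ≠ 0 → Module.End.HasEigenvalue (Matrix.toLin' M) t →
      t ∈ Set.Icc μ L)
    (P : Polynomial ℝ) (hP0 : P.eval 0 = 0)
    (hPbound : ∀ t ∈ Set.Icc μ L, 11 / 15 ≤ P.eval t ∧ P.eval t ≤ 19 / 15) :
    (Polynomial.aeval M P).PosSemidef ∧
    (∀ v : Fin p → ℝ,
      v ⬝ᵥ (Polynomial.aeval M P).mulVec v ≤ 19 / 15 * (v ⬝ᵥ v)) ∧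
    (∀ v : Fin p → ℝ,
      (∀ w, (Polynomial.aeval M P).mulVec w = 0 → v ⬝ᵥ w = 0) →
      11 / 15 * (v ⬝ᵥ v) ≤ v ⬝ᵥ (Polynomial.aeval M P).mulVec v) ∧
    (∀ a b : ℝ, a ≠ 0 → b ≠ 0 →
      Module.End.HasEigenvalue (Matrix.toLin' (Polynomial.aeval M P : Matrix (Fin p) (Fin p) ℝ)) a →
      Module.End.HasEigenvalue (Matrix.toLin' (Polynomial.aeval M P : Matrix (Fin p) (Fin p) ℝ)) b →
      a / b ≤ 19 / 11) := by
  classical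
  have hA := hM.1
  set N : Matrix (Fin p) (Fin p) ℝ := Polynomial.aeval M P with hNdef
  have hermN : N.IsHermitian := aux_isHermitian_aeval hA P
  have hNsymm : Nᵀ = N := by
    have := hermN.eq
    rwa [Matrix.conjTranspose_eq_transpose_of_trivial] at this
  set lam : Fin p → ℝ := hA.eigenvalues with hlamdef
  set c : Fin p → ℝ := fun i => P.eval (lam i) with hcdef
  set B : Fin p → (Fin p → ℝ) := fun i => ⇑(hA.eigenvectorBasis i) with hBdef
  have hMB : ∀ i, M *ᵥ B i = lam i • B i := fun i => hA.mulVec_eigenvectorBasis i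
  have hNB : ∀ i, N *ᵥ B i = c i • B i := fun i =>
    aux_mulVec_aeval M P (B i) (lam i) (hMB i)
  -- eigenvalue cases
  have hlam_cases : ∀ i, lam i = 0 ∨ lam i ∈ Set.Icc μ L := by
    intro i
    by_cases h : lam i = 0
    · exact Or.inl h
    · refine Or.inr (hEig _ h ?_)
      apply Module.End.hasEigenvalue_of_hasEigenvector (x := B i)
      refine ⟨Module.End.mem_eigenspace_iff.2 ?_, ?_⟩
      · rw [Matrix.toLin'_apply]; exact hMB i
      · intro h; apply hA.eigenvectorBasis.orthonormal.ne_zero i; ext j; simpa [hBdef] using congrFun h j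
  have hc_cases : ∀ i, c i = 0 ∨ (11 / 15 ≤ c i ∧ c i ≤ 19 / 15) := by
    intro i
    rcases hlam_cases i with h | h
    · left; simp [hcdef, h, hP0]
    · right; exact hPbound _ h
  have hc_nonneg : ∀ i, 0 ≤ c i := by
    intro i; rcases hc_cases i with h | h
    · simp [h]
    · linarith [h.1]
  have hc_le : ∀ i, c i ≤ 19 / 15 := by
    intro i; rcases hc_cases i with h | h
    · rw [h]; norm_num
    · exact h.2
  -- inner product / dot product dictionary
  have dot_inner : ∀ x y : EuclideanSpace ℝ (Fin p),
      (inner ℝ x y : ℝ) = (x : Fin p → ℝ) ⬝ᵥ (y : Fin p → ℝ) := by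
    intro x y
    simp [PiLp.inner_apply, dotProduct, mul_comm]
  have parseval : ∀ x y : Fin p → ℝ,
      x ⬝ᵥ y = ∑ i, (x ⬝ᵥ B i) * (B i ⬝ᵥ y) := by
    intro x y
    have h := hA.eigenvectorBasis.sum_inner_mul_inner
      (WithLp.toLp 2 x : EuclideanSpace ℝ (Fin p)) (WithLp.toLp 2 y : EuclideanSpace ℝ (Fin p))
    simp only [dot_inner, WithLp.ofLp_toLp] at h
    exact h.symm
  -- key quadratic-form computation
  have key : ∀ i (v : Fin p → ℝ), B i ⬝ᵥ (N *ᵥ v) = c i * (B i ⬝ᵥ v) := by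
    intro i v
    rw [Matrix.dotProduct_mulVec, ← Matrix.mulVec_transpose, hNsymm, hNB i,
      smul_dotProduct]
    rfl
  have quad : ∀ v : Fin p → ℝ,
      v ⬝ᵥ (N *ᵥ v) = ∑ i, c i * ((B i ⬝ᵥ v) * (B i ⬝ᵥ v)) := by
    intro v
    rw [parseval v (N *ᵥ v)]
    refine Finset.sum_congr rfl fun i _ => ?_
    rw [key i v, dotProduct_comm]
    ring
  have norm_eq : ∀ v : Fin p → ℝ, v ⬝ᵥ v = ∑ i, (B i ⬝ᵥ v) * (B i ⬝ᵥ v) := by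
    intro v
    rw [parseval v v]
    refine Finset.sum_congr rfl fun i _ => ?_
    rw [dotProduct_comm]
  refine ⟨Matrix.posSemidef_iff_dotProduct_mulVec.2 ⟨hermN, ?_⟩, ?_, ?_, ?_⟩
  · -- PSD
    intro v
    have : (0:ℝ) ≤ ∑ i, c i * ((B i ⬝ᵥ v) * (B i ⬝ᵥ v)) :=
      Finset.sum_nonneg fun i _ => mul_nonneg (hc_nonneg i) (mul_self_nonneg _)
    simpa [quad v] using this
  · -- upper bound
    intro v
    rw [quad v, norm_eq v, Finset.mul_sum]
    refine Finset.sum_le_sum fun i _ => ?_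
    exact mul_le_mul_of_nonneg_right (hc_le i) (mul_self_nonneg _)
  · -- lower bound on complement of kernel
    intro v hv
    have hker : ∀ i, c i = 0 → B i ⬝ᵥ v = 0 := by
      intro i hci
      have : N *ᵥ B i = 0 := by rw [hNB i, hci, zero_smul]
      have := hv (B i) this
      rwa [dotProduct_comm] at this
    rw [quad v, norm_eq v, Finset.mul_sum]
    refine Finset.sum_le_sum fun i _ => ?_
    rcases hc_cases i with h | h
    · rw [hker i h, h]; ring_nf; rfl
    · exact mul_le_mul_of_nonneg_right h.1 (mul_self_nonneg _)
  · -- eigenvalue ratio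
    have eig_bound : ∀ a : ℝ, a ≠ 0 →
        Module.End.HasEigenvalue (Matrix.toLin' N) a → 11 / 15 ≤ a ∧ a ≤ 19 / 15 := by
      intro a ha hEa
      obtain ⟨v, hv⟩ := hEa.exists_hasEigenvector
      have hvNe : v ≠ 0 := hv.right
      have hNv : N *ᵥ v = a • v := by
        have := hv.apply_eq_smul
        rwa [Matrix.toLin'_apply] at this
      have : ∃ i, B i ⬝ᵥ v ≠ 0 := by
        by_contra hcon
        push_neg at hcon
        have : v ⬝ᵥ v = 0 := by
          rw [norm_eq v]
          exact Finset.sum_eq_zero fun i _ => by rw [hcon i, mul_zero]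
        exact hvNe (dotProduct_self_eq_zero.1 this)
      obtain ⟨i, hi⟩ := this
      have h1 : c i * (B i ⬝ᵥ v) = a * (B i ⬝ᵥ v) := by
        rw [← key i v, hNv, dotProduct_smul]
        rfl
      have hac : a = c i := (mul_right_cancel₀ hi h1).symm
      rcases hc_cases i with h | h
      · exact absurd (hac.trans h) ha
      · rw [hac]; exact h
    intro a b ha hb hEa hEb
    obtain ⟨ha1, ha2⟩ := eig_bound a ha hEa
    obtain ⟨hb1, hb2⟩ := eig_bound b hb hEb
    calc a / b ≤ (19 / 15) / (11 / 15) := by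
          apply div_le_div₀ (by norm_num) ha2 (by norm_num) hb1
      _ = 19 / 11 := by norm_num
end

section
/- Let E₁ be the p×p matrix with rows alternately (1,−1,0,...), (0,...) shifted as in the lower-bound construction, so that E₁ᵀE₁ + E₂ᵀE₂ + e₁e₁ᵀ = M, where M is the tridiagonal matrix with 2 on the diagonal and −1 on the off-diagonals. Then the quadratic function h(z) = (1/2)zᵀMz + (2α/(β−α))‖z‖² − z₁ (with 0 < α < β) attains its minimum at the point z* with coordinates z*_k = q^k, where q = (1 − √(α/β))/(1 + √(α/β)). -/
open scoped ENNReal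

lemma l2mul {x y : ℕ → ℝ} (hx : Summable (fun k => x k ^ 2))
    (hy : Summable (fun k => y k ^ 2)) : Summable (fun k => x k * y k) := by
  apply Summable.of_abs
  apply Summable.of_nonneg_of_le (fun k => abs_nonneg _) (fun k => ?_) (hx.add hy)
  have := sq_nonneg (|x k| - |y k|)
  rw [abs_mul]
  nlinarith [sq_abs (x k), sq_abs (y k), abs_nonneg (x k), abs_nonneg (y k)]

lemma l2shift {x : ℕ → ℝ} (hx : Summable (fun k => x k ^ 2)) :
    Summable (fun k => x (k + 1) ^ 2) := (summable_nat_add_iff 1).mpr hx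

lemma l2g_summable {x y : ℕ → ℝ} (hx : Summable (fun k => x k ^ 2))
    (hy : Summable (fun k => y k ^ 2)) :
    Summable (fun k => (if k = 0 then (0:ℝ) else x (k-1)) * y k) := by
  rw [← summable_nat_add_iff 1]
  simpa using l2mul hx (l2shift hy)

lemma l2g_tsum {x y : ℕ → ℝ} (hx : Summable (fun k => x k ^ 2))
    (hy : Summable (fun k => y k ^ 2)) :
    (∑' k, (if k = 0 then (0:ℝ) else x (k-1)) * y k) = ∑' k, x k * y (k+1) := by
  rw [Summable.tsum_eq_zero_add (l2g_summable hx hy)]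
  simp

lemma Msum (z : ℕ → ℝ) (hz2 : Summable fun k => z k ^ 2) :
    ∑' k, (2 * z k - z (k+1) - (if k = 0 then (0:ℝ) else z (k-1))) * z k
      = 2*(∑' k, z k^2) - 2*(∑' k, z k * z (k+1)) := by
  have hf2 : Summable (fun k => z k * z (k+1)) := l2mul hz2 (l2shift hz2)
  have hg : Summable (fun k => (if k = 0 then (0:ℝ) else z (k-1)) * z k) :=
    l2g_summable hz2 hz2
  have h1 : ∀ k, (2 * z k - z (k+1) - (if k = 0 then (0:ℝ) else z (k-1))) * z k
      = 2 * z k ^ 2 - (z k * z (k+1) + (if k = 0 then (0:ℝ) else z (k-1)) * z k) := by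
    intro k; ring
  rw [tsum_congr h1, Summable.tsum_sub (hz2.mul_left 2) (hf2.add hg), tsum_mul_left,
    Summable.tsum_add hf2 hg, l2g_tsum hz2 hz2]
  ring

/-- in the semi-infinite (ℓ²) lower-bound construction, with `M` the
tridiagonal operator `(Mz)_k = 2z_k − z_{k−1} − z_{k+1}` (first row `2z_1 − z_2`),
the quadratic function `h(z) = (1/2)zᵀMz + (2α/(β−α))‖z‖² − z_1` (with `0 < α < β`)
attains its minimum over ℓ² at the point `z*` with coordinates `z*_k = q^k`,
`q = (1 − √(α/β))/(1 + √(α/β))`. Sequences are indexed from `0`, so coordinate `k`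
here is coordinate `k+1` of the paper and `z*` is `k ↦ q^(k+1)`. -/
theorem stmt14 (α β : ℝ) (hα : 0 < α) (hαβ : α < β)
    (Mop : (ℕ → ℝ) → (ℕ → ℝ))
    (hM : ∀ (z : ℕ → ℝ) (k : ℕ),
      Mop z k = 2 * z k - z (k + 1) - (if k = 0 then 0 else z (k - 1)))
    (h : (ℕ → ℝ) → ℝ)
    (hh : ∀ z : ℕ → ℝ, h z =
      1 / 2 * (∑' k, Mop z k * z k) + (2 * α / (β - α)) * (∑' k, (z k) ^ 2) - z 0)
    (q : ℝ) (hq : q = (1 - Real.sqrt (α / β)) / (1 + Real.sqrt (α / β)))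
    (zstar : ℕ → ℝ) (hzstar : ∀ k, zstar k = q ^ (k + 1)) :
    Memℓp zstar 2 ∧ ∀ z : ℕ → ℝ, Memℓp z 2 → h zstar ≤ h z := by
  have hβ : 0 < β := hα.trans hαβ
  set s := Real.sqrt (α / β) with hs
  have hs0 : 0 < s := Real.sqrt_pos.mpr (div_pos hα hβ)
  have hs1 : s < 1 := by
    rw [hs, show (1:ℝ) = Real.sqrt 1 by simp]
    exact Real.sqrt_lt_sqrt (by positivity) ((div_lt_one hβ).mpr hαβ)
  have hs2 : s^2 = α/β := Real.sq_sqrt (div_pos hα hβ).le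
  have hd : (0:ℝ) < 1 + s := by linarith
  have hq0 : 0 < q := by rw [hq]; exact div_pos (by linarith) hd
  have hq1 : q < 1 := by rw [hq]; rw [div_lt_one hd]; linarith
  set c : ℝ := 2 * α / (β - α) with hc
  have hba : (0:ℝ) < β - α := by linarith
  have hc0 : 0 < c := by positivity
  -- key identity
  have key : q^2 + 1 = 2 * (1 + c) * q := by
    have hqs : q * (1 + s) = 1 - s := by rw [hq]; field_simp
    have h1 : s^2 * β = α := by rw [hs2]; field_simp
    have h2 : (β - α) * (q^2+1) * (1+s)^2 = 2*(β+α)*q * (1+s)^2 := by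
      linear_combination ((β-α)*(q*(1+s) + (1-s)) - 2*(β+α)*(1+s)) * hqs + 4 * h1
    have h3 : (β - α) * (q^2+1) = 2*(β+α)*q :=
      mul_right_cancel₀ (pow_ne_zero 2 hd.ne') h2
    rw [hc]
    field_simp
    linarith [h3]
  -- summability of zstar squares
  have hzs2 : Summable (fun k => zstar k ^ 2) := by
    have hgeo : Summable (fun k : ℕ => q^2 * (q^2)^k) :=
      (summable_geometric_of_lt_one (by positivity) (by nlinarith)).mul_left _
    apply hgeo.congr
    intro k
    rw [hzstar]
    ring
  -- norm power conversion
  have hnorm : ∀ (x : ℝ), ‖x‖ ^ (2 : ℝ≥0∞).toReal = x ^ 2 := by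
    intro x
    rw [show (2 : ℝ≥0∞).toReal = ((2:ℕ):ℝ) by norm_num, Real.rpow_natCast,
      Real.norm_eq_abs, sq_abs]
  have hmem : Memℓp zstar 2 := by
    apply memℓp_gen
    exact hzs2.congr fun k => (hnorm _).symm
  refine ⟨hmem, ?_⟩
  -- formula for h on square-summable sequences
  have hform : ∀ z : ℕ → ℝ, Summable (fun k => z k ^ 2) →
      h z = (1 + c) * (∑' k, z k ^ 2) - (∑' k, z k * z (k+1)) - z 0 := by
    intro z hz2
    rw [hh z, tsum_congr (fun k => by rw [hM]), Msum z hz2]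
    ring
  intro z hz
  have hz2 : Summable (fun k => z k ^ 2) := by
    have := hz.summable (p := 2) (by norm_num)
    exact this.congr fun k => hnorm _
  obtain ⟨w, hw⟩ : ∃ w : ℕ → ℝ, ∀ k, w k = z k - zstar k := ⟨_, fun _ => rfl⟩
  have hw2 : Summable (fun k => w k ^ 2) := by
    apply Summable.congr ((hz2.add hzs2).sub ((l2mul hz2 hzs2).mul_left 2))
    intro k; simp only [hw]; ring
  have hws2 := l2shift hw2
  have hA : Summable (fun k => zstar k * w k) := l2mul hzs2 hw2
  have hB2 : Summable (fun k => zstar (k+1) * w k) := l2mul (l2shift hzs2) hw2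
  have hG : Summable (fun k => (if k = 0 then (0:ℝ) else zstar (k-1)) * w k) :=
    l2g_summable hzs2 hw2
  have hS1w : Summable (fun k => w k * w (k+1)) := l2mul hw2 hws2
  -- expansion of ∑ z k ^ 2
  have e2 : ∑' k, z k ^ 2 = (∑' k, zstar k ^ 2)
      + (2 * (∑' k, zstar k * w k) + ∑' k, w k ^ 2) := by
    have h1 : ∀ k, z k ^ 2 = zstar k ^ 2 + (2 * (zstar k * w k) + w k ^ 2) := by
      intro k; simp only [hw]; ring
    rw [tsum_congr h1, Summable.tsum_add hzs2 ((hA.mul_left 2).add hw2),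
      Summable.tsum_add (hA.mul_left 2) hw2, tsum_mul_left]
  -- expansion of ∑ z k * z (k+1)
  have hB1 : Summable (fun k => zstar k * w (k+1)) := l2mul hzs2 hws2
  have e1 : ∑' k, z k * z (k+1) = (∑' k, zstar k * zstar (k+1))
      + ((∑' k, zstar k * w (k+1)) + ((∑' k, zstar (k+1) * w k) + ∑' k, w k * w (k+1))) := by
    have hS1s : Summable (fun k => zstar k * zstar (k+1)) := l2mul hzs2 (l2shift hzs2)
    have h1 : ∀ k, z k * z (k+1) = zstar k * zstar (k+1)
        + (zstar k * w (k+1) + (zstar (k+1) * w k + w k * w (k+1))) := by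
      intro k; simp only [hw]; ring
    rw [tsum_congr h1, Summable.tsum_add hS1s (hB1.add (hB2.add hS1w)),
      Summable.tsum_add hB1 (hB2.add hS1w), Summable.tsum_add hB2 hS1w]
  -- the cross term vanishes
  have cross : 2 * (1 + c) * (∑' k, zstar k * w k) - (∑' k, zstar (k+1) * w k)
      - (∑' k, (if k = 0 then (0:ℝ) else zstar (k-1)) * w k) = w 0 := by
    have h1 : ∀ k, 2 * (1 + c) * (zstar k * w k) - zstar (k+1) * w k
        - (if k = 0 then (0:ℝ) else zstar (k-1)) * w k
        = (if k = 0 then w 0 else 0) := by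
      intro k
      cases k with
      | zero =>
        rw [if_pos rfl, if_pos rfl]
        simp only [hzstar]
        linear_combination (-(w 0)) * key
      | succ j =>
        rw [if_neg (Nat.succ_ne_zero j), if_neg (Nat.succ_ne_zero j)]
        simp only [hzstar, Nat.add_sub_cancel]
        linear_combination (-(q ^ (j+1) * w (j+1))) * key
    have h2 : ∑' k, (2 * (1 + c) * (zstar k * w k) - zstar (k+1) * w k
        - (if k = 0 then (0:ℝ) else zstar (k-1)) * w k) = w 0 := by
      rw [tsum_congr h1]
      exact tsum_ite_eq 0 (fun _ => w 0)
    rw [← h2, Summable.tsum_sub ((hA.mul_left (2*(1+c))).sub hB2) hG,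
      Summable.tsum_sub (hA.mul_left (2*(1+c))) hB2, tsum_mul_left]
  have hGB1 : (∑' k, (if k = 0 then (0:ℝ) else zstar (k-1)) * w k)
      = ∑' k, zstar k * w (k+1) := l2g_tsum hzs2 hw2
  -- bounding the quadratic form in w
  have hS2w_nonneg : 0 ≤ ∑' k, w k ^ 2 := tsum_nonneg fun k => sq_nonneg _
  have hshift_le : ∑' k, w (k+1) ^ 2 ≤ ∑' k, w k ^ 2 := by
    rw [Summable.tsum_eq_zero_add hw2]
    nlinarith [sq_nonneg (w 0)]
  have hS1w_le : ∑' k, w k * w (k+1) ≤ ∑' k, w k ^ 2 := by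
    have step : ∑' k, w k * w (k+1) ≤ ∑' k, (w k ^ 2 + w (k+1) ^ 2) / 2 := by
      apply Summable.tsum_le_tsum _ hS1w ((hw2.add hws2).div_const 2)
      intro k
      have := two_mul_le_add_sq (w k) (w (k+1))
      linarith
    have heq : ∑' k, (w k ^ 2 + w (k+1) ^ 2) / 2
        = ((∑' k, w k ^ 2) + ∑' k, w (k+1) ^ 2) / 2 := by
      rw [tsum_div_const, Summable.tsum_add hw2 hws2]
    linarith [step, heq, hshift_le]
  -- final computation
  have crossB : 2 * (1 + c) * (∑' k, zstar k * w k) - (∑' k, zstar (k+1) * w k)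
      - (∑' k, zstar k * w (k+1)) = w 0 := by rw [← hGB1]; exact cross
  have hz0 : z 0 = zstar 0 + w 0 := by rw [hw]; ring
  have hfin : h z - h zstar = (1 + c) * (∑' k, w k ^ 2) - (∑' k, w k * w (k+1)) := by
    rw [hform z hz2, hform zstar hzs2, e2, e1, hz0]
    linear_combination crossB
  nlinarith [mul_nonneg hc0.le hS2w_nonneg, hfin, hS1w_le]
end
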